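/- If (u,v,γ) is a nearest point in C̃_α to (u₀,v₀,γ₀), then u and u₀ are conically dependent (there exists s ≥ 0 with u = s u₀ or u₀ = s u), and likewise v and v₀ are conically dependent. -/

import Mathlib

variable {X : Type*} [NormedAddCommGroup X] [InnerProductSpace ℝ X]

/-- Squared β-weighted distance on `X × X × ℝ`. -/
noncomputable def d2 (β : ℝ) (p q : X × X × ℝ) : ℝ :=
  ‖p.1 - q.1‖^2 + ‖p.2.1 - q.2.1‖^2 + β^2 * (p.2.2 - q.2.2)^2

/-- The set of nearest points of `S` to `z` in the β-weighted norm. -/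
noncomputable def projSet (β : ℝ) (S : Set (X × X × ℝ)) (z : X × X × ℝ) :
    Set (X × X × ℝ) :=
  {p | p ∈ S ∧ ∀ q ∈ S, d2 β p z ≤ d2 β q z}

/-- The set `C̃_α`. -/
def Ctilde (α : ℝ) : Set (X × X × ℝ) := {p | ‖p.1‖^2 - ‖p.2.1‖^2 = 2 * α * p.2.2}

/-- The set `C_α`. -/
def Cα (α : ℝ) : Set (X × X × ℝ) := {p | (inner ℝ p.1 p.2.1 : ℝ) = α * p.2.2}

lemma sphere_min_conic (w w₀ : X)
    (h : ∀ w' : X, ‖w'‖ = ‖w‖ → ‖w - w₀‖^2 ≤ ‖w' - w₀‖^2) :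
    ∃ s : ℝ, 0 ≤ s ∧ (w = s • w₀ ∨ w₀ = s • w) := by
  by_cases h0 : w₀ = 0
  · exact ⟨0, le_refl 0, Or.inr (by simp [h0])⟩
  have hn0 : (0:ℝ) < ‖w₀‖ := norm_pos_iff.mpr h0
  set s : ℝ := ‖w‖ / ‖w₀‖ with hs
  have hs0 : 0 ≤ s := div_nonneg (norm_nonneg _) (norm_nonneg _)
  have hsn : s * ‖w₀‖ = ‖w‖ := div_mul_cancel₀ _ (ne_of_gt hn0)
  have hnorm : ‖s • w₀‖ = ‖w‖ := by
    rw [norm_smul, Real.norm_eq_abs, abs_of_nonneg hs0, hsn]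
  have key := h (s • w₀) hnorm
  rw [norm_sub_sq_real, norm_sub_sq_real, hnorm, real_inner_smul_left,
    real_inner_self_eq_norm_sq] at key
  -- key : ‖w‖^2 - 2*⟪w,w₀⟫ + ‖w₀‖^2 ≤ ‖w‖^2 - 2*(s*‖w₀‖^2) + ‖w₀‖^2
  have hip : ‖w‖ * ‖w₀‖ ≤ (inner ℝ w w₀ : ℝ) := by nlinarith [hsn]
  have hzero : ‖w - s • w₀‖^2 ≤ 0 := by
    rw [norm_sub_sq_real, hnorm, real_inner_smul_right]
    have h1 : ‖w‖^2 ≤ s * inner ℝ w w₀ := by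
      calc ‖w‖^2 = ‖w‖ * (s * ‖w₀‖) := by rw [hsn]; ring
        _ = s * (‖w‖ * ‖w₀‖) := by ring
        _ ≤ s * inner ℝ w w₀ := mul_le_mul_of_nonneg_left hip hs0
    linarith
  have : w - s • w₀ = 0 := by
    have := sq_nonneg ‖w - s • w₀‖
    have : ‖w - s • w₀‖^2 = 0 := le_antisymm hzero this
    simpa [pow_eq_zero_iff] using norm_eq_zero.mp (by nlinarith [norm_nonneg (w - s • w₀)])
  exact ⟨s, hs0, Or.inl (by rwa [sub_eq_zero] at this)⟩

theorem stmt6 (α β : ℝ) (hα : α ≠ 0) (hβ : 0 < β) (u₀ v₀ : X) (γ₀ : ℝ)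
    (u v : X) (γ : ℝ) (h : (u, v, γ) ∈ projSet β (Ctilde α) (u₀, v₀, γ₀)) :
    (∃ s : ℝ, 0 ≤ s ∧ (u = s • u₀ ∨ u₀ = s • u)) ∧
    (∃ s : ℝ, 0 ≤ s ∧ (v = s • v₀ ∨ v₀ = s • v)) := by
  obtain ⟨hmem, hmin⟩ := h
  constructor
  · apply sphere_min_conic
    intro u' hu'
    have hmem' : ((u', v, γ) : X × X × ℝ) ∈ Ctilde α := by
      simp only [Ctilde, Set.mem_setOf_eq] at hmem ⊢
      rw [hu']; exact hmem
    have := hmin _ hmem'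
    simp only [d2] at this
    linarith
  · apply sphere_min_conic
    intro v' hv'
    have hmem' : ((u, v', γ) : X × X × ℝ) ∈ Ctilde α := by
      simp only [Ctilde, Set.mem_setOf_eq] at hmem ⊢
      rw [hv']; exact hmem
    have := hmin _ hmem'
    simp only [d2] at this
    linarith
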